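/- Let q ∈ [0,1] and R_q > 0, and suppose Θ* ∈ ℝ^{(n+m)×n} satisfies ∑_{j=1}^n σ_j(Θ*)^q ≤ R_q, where σ_j(Θ*) are the singular values of Θ* (with the convention 0^0 = 0). Suppose the loss L_N satisfies the operator-norm curvature condition with curvature K > 0 and tolerance τ_N ≥ 0, i.e., ‖∇L_N(Θ*+Δ) − ∇L_N(Θ*)‖_op ≥ K‖Δ‖_op − τ_N‖Δ‖_nuc for all Δ ∈ ℝ^{(n+m)×n}; that 128·τ_N·R_q ≤ K; and that λ_N ≥ 2‖∇L_N(Θ*)‖_op. Then any global minimizer Θ̂ of L_N(Θ) + λ_N‖Θ‖_nuc satisfies ‖Θ̂ − Θ*‖_op ≤ max{32τ_N R_q/K, 6λ_N/K}. -/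

import Mathlib

open MeasureTheory ProbabilityTheory Matrix Real

/-- Frobenius norm of a real matrix. -/
noncomputable def frobNorm {p q : ℕ} (A : Matrix (Fin p) (Fin q) ℝ) : ℝ :=
  Real.sqrt (∑ i, ∑ j, (A i j) ^ 2)

/-- Singular values of a real matrix: square roots of the eigenvalues of Aᵀ * A. -/
noncomputable def svals {p q : ℕ} (A : Matrix (Fin p) (Fin q) ℝ) (j : Fin q) : ℝ :=
  Real.sqrt ((show (Aᵀ * A).IsHermitian by
    simpa [Matrix.conjTranspose_eq_transpose_of_trivial] using
      Matrix.isHermitian_conjTranspose_mul_self A).eigenvalues j)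

/-- Operator (spectral) norm: the largest singular value. -/
noncomputable def opNorm {p q : ℕ} (A : Matrix (Fin p) (Fin q) ℝ) : ℝ := ⨆ j, svals A j

/-- Nuclear norm: the sum of the singular values. -/
noncomputable def nucNorm {p q : ℕ} (A : Matrix (Fin p) (Fin q) ℝ) : ℝ := ∑ j, svals A j

/-- The least-squares loss L_N(Θ) = (1/(2N)) ‖X − ZΘ‖_F². -/
noncomputable def lossFn {N n d : ℕ} (X : Matrix (Fin N) (Fin n) ℝ)
    (Z : Matrix (Fin N) (Fin d) ℝ) (Θ : Matrix (Fin d) (Fin n) ℝ) : ℝ :=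
  (1 / (2 * (N : ℝ))) * (frobNorm (X - Z * Θ)) ^ 2

/-- The gradient of the least-squares loss: ∇L_N(Θ) = (1/N) Zᵀ(ZΘ − X). -/
noncomputable def gradFn {N n d : ℕ} (X : Matrix (Fin N) (Fin n) ℝ)
    (Z : Matrix (Fin N) (Fin d) ℝ) (Θ : Matrix (Fin d) (Fin n) ℝ) : Matrix (Fin d) (Fin n) ℝ :=
  (1 / (N : ℝ)) • (Zᵀ * (Z * Θ - X))

namespace OpAux
variable {k p q : ℕ}

noncomputable def vnorm {k : ℕ} (v : Fin k → ℝ) : ℝ := Real.sqrt (v ⬝ᵥ v)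

lemma dot_self_nonneg (v : Fin k → ℝ) : 0 ≤ v ⬝ᵥ v :=
  Finset.sum_nonneg fun i _ => mul_self_nonneg _

lemma vnorm_nonneg (v : Fin k → ℝ) : 0 ≤ vnorm v := Real.sqrt_nonneg _

lemma vnorm_sq (v : Fin k → ℝ) : vnorm v ^ 2 = v ⬝ᵥ v := Real.sq_sqrt (dot_self_nonneg v)

lemma vnorm_eq_of_dot {v : Fin k → ℝ} {c : ℝ} (hc : 0 ≤ c) (h : v ⬝ᵥ v = c ^ 2) :
    vnorm v = c := by rw [vnorm, h, Real.sqrt_sq hc]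

lemma dot_le_vnorm_mul_vnorm (u v : Fin k → ℝ) : u ⬝ᵥ v ≤ vnorm u * vnorm v := by
  have h := Finset.sum_mul_sq_le_sq_mul_sq Finset.univ u v
  have h2 : (u ⬝ᵥ v) ≤ |u ⬝ᵥ v| := le_abs_self _
  refine h2.trans ?_
  rw [← Real.sqrt_sq_eq_abs, vnorm, vnorm, ← Real.sqrt_mul (dot_self_nonneg u)]
  apply Real.sqrt_le_sqrt
  simpa [dotProduct, pow_two] using h

lemma vnorm_smul (c : ℝ) (v : Fin k → ℝ) : vnorm (c • v) = |c| * vnorm v := by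
  have h : (c • v) ⬝ᵥ (c • v) = c^2 * (v ⬝ᵥ v) := by
    simp [dotProduct, Finset.mul_sum]
    exact Finset.sum_congr rfl fun i _ => by ring
  rw [vnorm, vnorm, h, Real.sqrt_mul (sq_nonneg c), Real.sqrt_sq_eq_abs]

lemma vnorm_neg (v : Fin k → ℝ) : vnorm (-v) = vnorm v := by
  have := vnorm_smul (-1 : ℝ) v; simpa using this

lemma vnorm_add_le (u v : Fin k → ℝ) : vnorm (u + v) ≤ vnorm u + vnorm v := by
  have h1 : (u + v) ⬝ᵥ (u + v) = u ⬝ᵥ u + 2 * (u ⬝ᵥ v) + v ⬝ᵥ v := by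
    simp only [dotProduct, Pi.add_apply, Finset.mul_sum, ← Finset.sum_add_distrib]
    exact Finset.sum_congr rfl fun i _ => by ring
  have h2 : (u + v) ⬝ᵥ (u + v) ≤ (vnorm u + vnorm v)^2 := by
    rw [h1, add_sq, vnorm_sq, vnorm_sq]
    have := dot_le_vnorm_mul_vnorm u v
    nlinarith
  calc vnorm (u+v) = Real.sqrt ((u+v) ⬝ᵥ (u+v)) := rfl
    _ ≤ Real.sqrt ((vnorm u + vnorm v)^2) := Real.sqrt_le_sqrt h2
    _ = vnorm u + vnorm v := Real.sqrt_sq (by have := vnorm_nonneg u; have := vnorm_nonneg v; linarith)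


/-- Frobenius inner product -/
def fip {p q : ℕ} (A B : Matrix (Fin p) (Fin q) ℝ) : ℝ := ∑ i, ∑ j, A i j * B i j

lemma fip_comm (A B : Matrix (Fin p) (Fin q) ℝ) : fip A B = fip B A := by
  unfold fip; exact Finset.sum_congr rfl fun i _ => Finset.sum_congr rfl fun j _ => mul_comm _ _

lemma fip_add_right (A B C : Matrix (Fin p) (Fin q) ℝ) :
    fip A (B + C) = fip A B + fip A C := by
  unfold fip
  rw [← Finset.sum_add_distrib]
  refine Finset.sum_congr rfl fun i _ => ?_
  rw [← Finset.sum_add_distrib]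
  exact Finset.sum_congr rfl fun j _ => by simp [mul_add]

lemma fip_neg_left (A B : Matrix (Fin p) (Fin q) ℝ) : fip (-A) B = -fip A B := by
  unfold fip; simp [Finset.sum_neg_distrib]

lemma fip_smul_left (c : ℝ) (A B : Matrix (Fin p) (Fin q) ℝ) : fip (c • A) B = c * fip A B := by
  unfold fip; simp [Finset.mul_sum]; exact Finset.sum_congr rfl fun i _ =>
    Finset.sum_congr rfl fun j _ => by ring

lemma fip_sum_right {ι : Type*} (s : Finset ι) (A : Matrix (Fin p) (Fin q) ℝ)
    (f : ι → Matrix (Fin p) (Fin q) ℝ) : fip A (∑ j ∈ s, f j) = ∑ j ∈ s, fip A (f j) := by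
  unfold fip
  have h1 : ∀ i j', (∑ j ∈ s, f j) i j' = ∑ j ∈ s, f j i j' := by
    intro i j'; simp [Matrix.sum_apply]
  calc ∑ i, ∑ j', A i j' * (∑ j ∈ s, f j) i j'
      = ∑ i, ∑ j', ∑ j ∈ s, A i j' * f j i j' := by
        refine Finset.sum_congr rfl fun i _ => Finset.sum_congr rfl fun j' _ => ?_
        rw [h1, Finset.mul_sum]
    _ = ∑ i, ∑ j ∈ s, ∑ j', A i j' * f j i j' := by
        exact Finset.sum_congr rfl fun i _ => Finset.sum_comm
    _ = ∑ j ∈ s, ∑ i, ∑ j', A i j' * f j i j' := Finset.sum_comm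

lemma fip_vecMulVec_right (A : Matrix (Fin p) (Fin q) ℝ) (x : Fin p → ℝ) (y : Fin q → ℝ) :
    fip A (vecMulVec x y) = x ⬝ᵥ (A *ᵥ y) := by
  unfold fip vecMulVec dotProduct mulVec
  simp only [of_apply, dotProduct, Finset.mul_sum]
  exact Finset.sum_congr rfl fun i _ => Finset.sum_congr rfl fun j _ => by ring

lemma fip_transpose_mul {N : ℕ} (Z : Matrix (Fin N) (Fin p) ℝ) (M : Matrix (Fin N) (Fin q) ℝ)
    (Δ : Matrix (Fin p) (Fin q) ℝ) : fip (Zᵀ * M) Δ = fip M (Z * Δ) := by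
  unfold fip
  simp only [mul_apply, transpose_apply, Finset.sum_mul, Finset.mul_sum]
  calc ∑ l, ∑ j, ∑ i, Z i l * M i j * Δ l j
      = ∑ l, ∑ i, ∑ j, Z i l * M i j * Δ l j := by
        exact Finset.sum_congr rfl fun l _ => Finset.sum_comm
    _ = ∑ i, ∑ l, ∑ j, Z i l * M i j * Δ l j := Finset.sum_comm
    _ = ∑ i, ∑ j, ∑ l, M i j * (Z i l * Δ l j) := by
        refine Finset.sum_congr rfl fun i _ => ?_
        rw [Finset.sum_comm]
        exact Finset.sum_congr rfl fun j _ => Finset.sum_congr rfl fun l _ => by ring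

lemma fip_self_nonneg (A : Matrix (Fin p) (Fin q) ℝ) : 0 ≤ fip A A :=
  Finset.sum_nonneg fun i _ => Finset.sum_nonneg fun j _ => mul_self_nonneg _

lemma hermT (A : Matrix (Fin p) (Fin q) ℝ) : (Aᵀ * A).IsHermitian := by
  simpa [Matrix.conjTranspose_eq_transpose_of_trivial] using
    Matrix.isHermitian_conjTranspose_mul_self A

noncomputable def evec (A : Matrix (Fin p) (Fin q) ℝ) (j : Fin q) : Fin q → ℝ :=
  (WithLp.equiv 2 _) ((hermT A).eigenvectorBasis j)

noncomputable def eig (A : Matrix (Fin p) (Fin q) ℝ) (j : Fin q) : ℝ :=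
  (hermT A).eigenvalues j

lemma eig_nonneg (A : Matrix (Fin p) (Fin q) ℝ) (j : Fin q) : 0 ≤ eig A j :=
  Matrix.eigenvalues_conjTranspose_mul_self_nonneg A j

lemma svals_nonneg (A : Matrix (Fin p) (Fin q) ℝ) (j : Fin q) : 0 ≤ svals A j :=
  Real.sqrt_nonneg _

lemma sq_svals (A : Matrix (Fin p) (Fin q) ℝ) (j : Fin q) : svals A j ^ 2 = eig A j :=
  Real.sq_sqrt (eig_nonneg A j)

lemma H_mulVec (A : Matrix (Fin p) (Fin q) ℝ) (j : Fin q) :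
    (Aᴴ * A) *ᵥ evec A j = eig A j • evec A j :=
  Matrix.IsHermitian.mulVec_eigenvectorBasis _ j

lemma evec_dot (A : Matrix (Fin p) (Fin q) ℝ) (j l : Fin q) :
    evec A j ⬝ᵥ evec A l = if j = l then 1 else 0 := by
  have hU : star ((hermT A).eigenvectorUnitary).1
      * ((hermT A).eigenvectorUnitary).1 = 1 :=
    ((hermT A).eigenvectorUnitary).2.1
  have h := congrFun (congrFun hU j) l
  rw [Matrix.mul_apply] at h
  rw [Matrix.one_apply] at h
  simp only [Matrix.star_apply, star_trivial,
    Matrix.IsHermitian.eigenvectorUnitary_apply] at h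
  rw [dotProduct, ← h]
  refine Finset.sum_congr rfl fun i _ => ?_
  simp [evec, Matrix.star_apply, star_trivial, Matrix.IsHermitian.eigenvectorUnitary_apply, mul_comm]

lemma evec_complete (A : Matrix (Fin p) (Fin q) ℝ) (i i' : Fin q) :
    ∑ j, evec A j i * evec A j i' = if i = i' then 1 else 0 := by
  have hU : ((hermT A).eigenvectorUnitary).1
      * star ((hermT A).eigenvectorUnitary).1 = 1 :=
    ((hermT A).eigenvectorUnitary).2.2
  have h := congrFun (congrFun hU i) i'
  rw [Matrix.mul_apply] at h
  rw [Matrix.one_apply] at h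
  simp only [Matrix.star_apply, star_trivial,
    Matrix.IsHermitian.eigenvectorUnitary_apply] at h
  rw [← h]
  refine Finset.sum_congr rfl fun j _ => ?_
  simp [evec, Matrix.star_apply, star_trivial, Matrix.IsHermitian.eigenvectorUnitary_apply]



-- Section 4: mulVec identities, uvec, decomposition, Parseval, opNorm characterization
variable {k p q : ℕ}

lemma mulVec_dot (A : Matrix (Fin p) (Fin q) ℝ) (u v : Fin q → ℝ) :
    (A *ᵥ u) ⬝ᵥ (A *ᵥ v) = u ⬝ᵥ ((Aᴴ * A) *ᵥ v) := by
  rw [Matrix.conjTranspose_eq_transpose_of_trivial, Matrix.dotProduct_mulVec,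
    ← Matrix.vecMul_transpose, Matrix.vecMul_vecMul, Matrix.dotProduct_mulVec]

lemma dot_mulVec_eq (M : Matrix (Fin p) (Fin q) ℝ) (u : Fin p → ℝ) (v : Fin q → ℝ) :
    u ⬝ᵥ (M *ᵥ v) = (Mᵀ *ᵥ u) ⬝ᵥ v := by
  rw [Matrix.mulVec_transpose, Matrix.dotProduct_mulVec]

lemma sum_mulVec {ι : Type*} (S : Finset ι) (M : ι → Matrix (Fin p) (Fin q) ℝ) (x : Fin q → ℝ) :
    (∑ j ∈ S, M j) *ᵥ x = ∑ j ∈ S, (M j *ᵥ x) := by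
  ext i
  rw [Finset.sum_apply]
  simp only [Matrix.mulVec, dotProduct, Matrix.sum_apply]
  rw [Finset.sum_comm]
  exact Finset.sum_congr rfl fun l _ => by rw [Finset.sum_mul]

lemma vecMulVec_mulVec (a : Fin p → ℝ) (b : Fin q → ℝ) (x : Fin q → ℝ) :
    Matrix.vecMulVec a b *ᵥ x = (b ⬝ᵥ x) • a := by
  ext i
  simp only [Matrix.mulVec, dotProduct, Matrix.vecMulVec_apply, Pi.smul_apply, smul_eq_mul,
    Finset.sum_mul]
  exact Finset.sum_congr rfl fun l _ => by ring

lemma dot_sum_sum {ι κ : Type*} (S : Finset ι) (T : Finset κ)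
    (w : ι → Fin k → ℝ) (z : κ → Fin k → ℝ) (c : ι → ℝ) (e : κ → ℝ) :
    (∑ j ∈ S, c j • w j) ⬝ᵥ (∑ l ∈ T, e l • z l)
      = ∑ j ∈ S, ∑ l ∈ T, c j * e l * (w j ⬝ᵥ z l) := by
  unfold dotProduct
  have h1 : ∀ i, (∑ j ∈ S, c j • w j) i * (∑ l ∈ T, e l • z l) i
      = ∑ j ∈ S, ∑ l ∈ T, (c j * e l) * (w j i * z l i) := by
    intro i
    rw [Finset.sum_apply, Finset.sum_apply, Finset.sum_mul_sum]
    exact Finset.sum_congr rfl fun j _ => Finset.sum_congr rfl fun l _ => by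
      simp only [Pi.smul_apply, smul_eq_mul]; try ring
  simp_rw [h1]
  calc ∑ i, ∑ j ∈ S, ∑ l ∈ T, (c j * e l) * (w j i * z l i)
      = ∑ j ∈ S, ∑ i, ∑ l ∈ T, (c j * e l) * (w j i * z l i) := Finset.sum_comm
    _ = ∑ j ∈ S, ∑ l ∈ T, ∑ i, (c j * e l) * (w j i * z l i) :=
        Finset.sum_congr rfl fun j _ => Finset.sum_comm
    _ = ∑ j ∈ S, ∑ l ∈ T, c j * e l * (w j ⬝ᵥ z l) := by
        refine Finset.sum_congr rfl fun j _ => Finset.sum_congr rfl fun l _ => ?_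
        rw [dotProduct]
        conv_rhs => rw [Finset.mul_sum]

/-- left singular vectors, unnormalized: `uvec A j = A *ᵥ evec A j`, norm `svals A j`. -/
noncomputable def uvec (A : Matrix (Fin p) (Fin q) ℝ) (j : Fin q) : Fin p → ℝ :=
  A *ᵥ evec A j

lemma uvec_dot (A : Matrix (Fin p) (Fin q) ℝ) (j l : Fin q) :
    uvec A j ⬝ᵥ uvec A l = if j = l then eig A j else 0 := by
  unfold uvec
  rw [mulVec_dot, H_mulVec, dotProduct_smul, evec_dot, smul_eq_mul]
  by_cases h : j = l
  · subst h; simp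
  · simp [h]

lemma vnorm_uvec (A : Matrix (Fin p) (Fin q) ℝ) (j : Fin q) :
    vnorm (uvec A j) = svals A j := by
  apply vnorm_eq_of_dot (svals_nonneg A j)
  rw [uvec_dot, sq_svals]; simp

lemma vnorm_evec (A : Matrix (Fin p) (Fin q) ℝ) (j : Fin q) : vnorm (evec A j) = 1 := by
  apply vnorm_eq_of_dot zero_le_one
  rw [evec_dot]; simp

/-- Parseval -/
lemma sum_dot_sq (A : Matrix (Fin p) (Fin q) ℝ) (x : Fin q → ℝ) :
    ∑ j, (evec A j ⬝ᵥ x)^2 = x ⬝ᵥ x := by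
  have : ∀ j, (evec A j ⬝ᵥ x)^2 = ∑ i, ∑ i', evec A j i * evec A j i' * (x i * x i') := by
    intro j
    rw [pow_two, dotProduct, Finset.sum_mul_sum]
    exact Finset.sum_congr rfl fun i _ => Finset.sum_congr rfl fun i' _ => by ring
  simp_rw [this]
  rw [Finset.sum_comm]
  have : ∀ i, ∑ j, ∑ i', evec A j i * evec A j i' * (x i * x i')
      = ∑ i', (∑ j, evec A j i * evec A j i') * (x i * x i') := by
    intro i
    rw [Finset.sum_comm]
    exact Finset.sum_congr rfl fun i' _ => by rw [Finset.sum_mul]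
  simp_rw [this, evec_complete]
  simp [dotProduct, pow_two]

/-- SVD decomposition -/
lemma matrix_eq_sum_vecMulVec (A : Matrix (Fin p) (Fin q) ℝ) :
    A = ∑ j, Matrix.vecMulVec (uvec A j) (evec A j) := by
  ext i l
  rw [Matrix.sum_apply]
  simp only [Matrix.vecMulVec_apply, uvec, Matrix.mulVec, dotProduct]
  have : ∀ j, (∑ l', A i l' * evec A j l') * evec A j l
      = ∑ l', A i l' * (evec A j l' * evec A j l) := by
    intro j; rw [Finset.sum_mul]; exact Finset.sum_congr rfl fun l' _ => by ring
  simp_rw [this]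
  rw [Finset.sum_comm]
  have : ∀ l', ∑ j, A i l' * (evec A j l' * evec A j l) = A i l' * ∑ j, evec A j l' * evec A j l := by
    intro l'; rw [Finset.mul_sum]
  simp_rw [this, evec_complete]
  simp [Finset.sum_ite_eq]

lemma svals_le_opNorm (A : Matrix (Fin p) (Fin q) ℝ) (j : Fin q) : svals A j ≤ opNorm A :=
  le_ciSup (Set.Finite.bddAbove (Set.finite_range _)) j

lemma eig_le_sq_opNorm (A : Matrix (Fin p) (Fin q) ℝ) (j : Fin q) :
    eig A j ≤ opNorm A ^ 2 := by
  have h1 := svals_le_opNorm A j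
  have := svals_nonneg A j
  rw [← sq_svals]
  nlinarith

lemma opNorm_nonneg (A : Matrix (Fin p) (Fin q) ℝ) : 0 ≤ opNorm A := by
  rcases isEmpty_or_nonempty (Fin q) with h | h
  · rw [opNorm, Real.iSup_of_isEmpty]
  · exact le_trans (svals_nonneg A (Classical.arbitrary _)) (svals_le_opNorm A _)

/-- expansion of `A *ᵥ v` in singular vectors -/
lemma mulVec_eq_sum (A : Matrix (Fin p) (Fin q) ℝ) (v : Fin q → ℝ) :
    A *ᵥ v = ∑ j, (evec A j ⬝ᵥ v) • uvec A j := by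
  conv_lhs => rw [matrix_eq_sum_vecMulVec A]
  rw [sum_mulVec]
  exact Finset.sum_congr rfl fun j _ => vecMulVec_mulVec _ _ _

/-- operator norm bound on matrix-vector products -/
lemma vnorm_mulVec_le (A : Matrix (Fin p) (Fin q) ℝ) (v : Fin q → ℝ) :
    vnorm (A *ᵥ v) ≤ opNorm A * vnorm v := by
  have key : (A *ᵥ v) ⬝ᵥ (A *ᵥ v) ≤ opNorm A ^2 * (v ⬝ᵥ v) := by
    rw [mulVec_eq_sum, dot_sum_sum]
    have : ∀ j, ∑ l, (evec A j ⬝ᵥ v) * (evec A l ⬝ᵥ v) * (uvec A j ⬝ᵥ uvec A l)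
        = (evec A j ⬝ᵥ v)^2 * eig A j := by
      intro j
      rw [Finset.sum_eq_single j]
      · rw [uvec_dot, if_pos rfl]; ring
      · intro l _ hl; rw [uvec_dot]; simp [(Ne.symm hl : ¬ j = l)]
      · simp
    simp_rw [this]
    rw [← sum_dot_sq A v, Finset.mul_sum]
    refine Finset.sum_le_sum fun j _ => ?_
    have h1 := eig_le_sq_opNorm A j
    have h2 := sq_nonneg (evec A j ⬝ᵥ v)
    have h3 := eig_nonneg A j
    nlinarith
  calc vnorm (A *ᵥ v) = Real.sqrt ((A *ᵥ v) ⬝ᵥ (A *ᵥ v)) := rfl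
    _ ≤ Real.sqrt (opNorm A ^2 * (v ⬝ᵥ v)) := Real.sqrt_le_sqrt key
    _ = opNorm A * vnorm v := by
        rw [Real.sqrt_mul (sq_nonneg _), Real.sqrt_sq (opNorm_nonneg A)]; rfl

/-- converse characterization -/
lemma opNorm_le_of (A : Matrix (Fin p) (Fin q) ℝ) {c : ℝ} (hc : 0 ≤ c)
    (h : ∀ v, vnorm (A *ᵥ v) ≤ c * vnorm v) : opNorm A ≤ c := by
  rcases isEmpty_or_nonempty (Fin q) with hq | hq
  · rw [opNorm, Real.iSup_of_isEmpty]; exact hc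
  · refine ciSup_le fun j => ?_
    have h1 := h (evec A j)
    rw [vnorm_evec, mul_one] at h1
    rw [← vnorm_uvec]
    exact h1

lemma opNorm_neg_le (A : Matrix (Fin p) (Fin q) ℝ) : opNorm (-A) ≤ opNorm A := by
  refine opNorm_le_of _ (opNorm_nonneg A) fun v => ?_
  rw [Matrix.neg_mulVec, vnorm_neg]
  exact vnorm_mulVec_le A v

lemma opNorm_transpose_le (A : Matrix (Fin p) (Fin q) ℝ) : opNorm Aᵀ ≤ opNorm A := by
  refine opNorm_le_of _ (opNorm_nonneg A) fun v => ?_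
  rcases eq_or_lt_of_le (vnorm_nonneg (Aᵀ *ᵥ v)) with h0 | h0
  · rw [← h0]; exact mul_nonneg (opNorm_nonneg A) (vnorm_nonneg v)
  · have h1 : (Aᵀ *ᵥ v) ⬝ᵥ (Aᵀ *ᵥ v) = (A *ᵥ (Aᵀ *ᵥ v)) ⬝ᵥ v := by
      rw [dot_mulVec_eq, Matrix.transpose_transpose]
    have h2 : (A *ᵥ (Aᵀ *ᵥ v)) ⬝ᵥ v ≤ vnorm (A *ᵥ (Aᵀ *ᵥ v)) * vnorm v :=
      dot_le_vnorm_mul_vnorm _ _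
    have h3 : vnorm (A *ᵥ (Aᵀ *ᵥ v)) ≤ opNorm A * vnorm (Aᵀ *ᵥ v) := vnorm_mulVec_le _ _
    have h4 : vnorm (Aᵀ *ᵥ v)^2 ≤ opNorm A * vnorm (Aᵀ *ᵥ v) * vnorm v := by
      rw [vnorm_sq, h1]
      refine h2.trans ?_
      exact mul_le_mul_of_nonneg_right h3 (vnorm_nonneg v)
    have h5 : vnorm (Aᵀ *ᵥ v) * vnorm (Aᵀ *ᵥ v) ≤ (opNorm A * vnorm v) * vnorm (Aᵀ *ᵥ v) := by
      nlinarith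
    exact le_of_mul_le_mul_right (by nlinarith) h0

-- Section 5: trace duality, dual witness, triangle inequality
variable {k p q : ℕ}

lemma dot_sum_right {ι : Type*} (S : Finset ι) (u : Fin k → ℝ) (f : ι → Fin k → ℝ) :
    u ⬝ᵥ (∑ j ∈ S, f j) = ∑ j ∈ S, u ⬝ᵥ f j := by
  unfold dotProduct
  rw [Finset.sum_comm]
  refine Finset.sum_congr rfl fun i _ => ?_
  rw [Finset.sum_apply, Finset.mul_sum]

lemma nucNorm_nonneg (A : Matrix (Fin p) (Fin q) ℝ) : 0 ≤ nucNorm A :=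
  Finset.sum_nonneg fun j _ => svals_nonneg A j

lemma fip_expand (A B : Matrix (Fin p) (Fin q) ℝ) :
    fip A B = ∑ j, uvec B j ⬝ᵥ (A *ᵥ evec B j) := by
  conv_lhs => rw [show B = ∑ j, Matrix.vecMulVec (uvec B j) (evec B j) from
    matrix_eq_sum_vecMulVec B]
  rw [fip_sum_right]
  exact Finset.sum_congr rfl fun j _ => fip_vecMulVec_right _ _ _

/-- trace duality -/
lemma fip_le_op_mul_nuc (A B : Matrix (Fin p) (Fin q) ℝ) :
    fip A B ≤ opNorm A * nucNorm B := by
  rw [fip_expand, nucNorm, Finset.mul_sum]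
  refine Finset.sum_le_sum fun j _ => ?_
  calc uvec B j ⬝ᵥ (A *ᵥ evec B j) ≤ vnorm (uvec B j) * vnorm (A *ᵥ evec B j) :=
        dot_le_vnorm_mul_vnorm _ _
    _ ≤ vnorm (uvec B j) * (opNorm A * vnorm (evec B j)) :=
        mul_le_mul_of_nonneg_left (vnorm_mulVec_le _ _) (vnorm_nonneg _)
    _ = opNorm A * svals B j := by rw [vnorm_uvec, vnorm_evec, mul_one]; ring

lemma neg_fip_le (A B : Matrix (Fin p) (Fin q) ℝ) :
    -(opNorm A * nucNorm B) ≤ fip A B := by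
  have h := fip_le_op_mul_nuc (-A) B
  rw [fip_neg_left] at h
  have h2 : opNorm (-A) * nucNorm B ≤ opNorm A * nucNorm B :=
    mul_le_mul_of_nonneg_right (opNorm_neg_le A) (nucNorm_nonneg B)
  linarith

/-- dual witness -/
lemma exists_witness (B : Matrix (Fin p) (Fin q) ℝ) :
    ∃ W : Matrix (Fin p) (Fin q) ℝ, opNorm W ≤ 1 ∧ fip W B = nucNorm B := by
  classical
  set κ : Fin q → ℝ := fun j => if svals B j = 0 then 0 else (svals B j)⁻¹ with hκ
  refine ⟨∑ j, κ j • Matrix.vecMulVec (uvec B j) (evec B j), ?_, ?_⟩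
  · -- operator norm ≤ 1
    refine opNorm_le_of _ zero_le_one fun x => ?_
    have hWx : (∑ j, κ j • Matrix.vecMulVec (uvec B j) (evec B j)) *ᵥ x
        = ∑ j, (κ j * (evec B j ⬝ᵥ x)) • uvec B j := by
      rw [sum_mulVec]
      refine Finset.sum_congr rfl fun j _ => ?_
      rw [Matrix.smul_mulVec, vecMulVec_mulVec, smul_smul, mul_comm]
    rw [hWx, one_mul]
    have hnsq : (∑ j, (κ j * (evec B j ⬝ᵥ x)) • uvec B j) ⬝ᵥ
        (∑ j, (κ j * (evec B j ⬝ᵥ x)) • uvec B j) ≤ x ⬝ᵥ x := by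
      rw [dot_sum_sum]
      have : ∀ j, ∑ l, (κ j * (evec B j ⬝ᵥ x)) * (κ l * (evec B l ⬝ᵥ x)) * (uvec B j ⬝ᵥ uvec B l)
          = (evec B j ⬝ᵥ x)^2 * (κ j^2 * eig B j) := by
        intro j
        rw [Finset.sum_eq_single j]
        · rw [uvec_dot, if_pos rfl]; ring
        · intro l _ hl; rw [uvec_dot, if_neg (Ne.symm hl)]; ring
        · simp
      simp_rw [this]
      rw [← sum_dot_sq B x]
      refine Finset.sum_le_sum fun j _ => ?_
      have hb : κ j^2 * eig B j ≤ 1 := by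
        by_cases h : svals B j = 0
        · have h0 : κ j = 0 := by simp [hκ, h]
          simp [h0]
        · have h0 : κ j = (svals B j)⁻¹ := by simp [hκ, h]
          rw [h0, ← sq_svals, inv_pow, inv_mul_cancel₀ (pow_ne_zero 2 h)]
      have h2 := sq_nonneg (evec B j ⬝ᵥ x)
      have h3 := eig_nonneg B j
      have h4 : 0 ≤ κ j^2 * eig B j := mul_nonneg (sq_nonneg _) h3
      nlinarith
    calc vnorm (∑ j, (κ j * (evec B j ⬝ᵥ x)) • uvec B j)
        = Real.sqrt ((∑ j, (κ j * (evec B j ⬝ᵥ x)) • uvec B j) ⬝ᵥ _) := rfl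
      _ ≤ Real.sqrt (x ⬝ᵥ x) := Real.sqrt_le_sqrt hnsq
      _ = vnorm x := rfl
  · -- fip W B = nucNorm B
    rw [fip_expand]
    have : ∀ l, uvec B l ⬝ᵥ ((∑ j, κ j • Matrix.vecMulVec (uvec B j) (evec B j)) *ᵥ evec B l)
        = svals B l := by
      intro l
      rw [sum_mulVec]
      have : ∀ j, (κ j • Matrix.vecMulVec (uvec B j) (evec B j)) *ᵥ evec B l
          = (κ j * (evec B j ⬝ᵥ evec B l)) • uvec B j := by
        intro j; rw [Matrix.smul_mulVec, vecMulVec_mulVec, smul_smul, mul_comm]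
      simp_rw [this, evec_dot]
      rw [dot_sum_right]
      rw [Finset.sum_eq_single l]
      · rw [if_pos rfl, mul_one, dotProduct_smul, uvec_dot, if_pos rfl, smul_eq_mul]
        show κ l * eig B l = svals B l
        by_cases h : svals B l = 0
        · have h0 : κ l = 0 := by simp [hκ, h]
          rw [h0, h, zero_mul]
        · have h0 : κ l = (svals B l)⁻¹ := by simp [hκ, h]
          rw [h0, ← sq_svals, sq, ← mul_assoc, inv_mul_cancel₀ h, one_mul]
      · intro j _ hj
        rw [if_neg hj]
        simp
      · simp
    simp_rw [this]
    rfl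

-- Section 6: named witness, triangle inequality, nuc of vecMulVec sums
variable {k p q : ℕ}

noncomputable def kap (B : Matrix (Fin p) (Fin q) ℝ) (j : Fin q) : ℝ :=
  if svals B j = 0 then 0 else (svals B j)⁻¹

noncomputable def witness (B : Matrix (Fin p) (Fin q) ℝ) : Matrix (Fin p) (Fin q) ℝ :=
  ∑ j, kap B j • Matrix.vecMulVec (uvec B j) (evec B j)

lemma kap_nonneg (B : Matrix (Fin p) (Fin q) ℝ) (j : Fin q) : 0 ≤ kap B j := by
  unfold kap; split
  · exact le_refl 0
  · exact inv_nonneg.mpr (svals_nonneg B j)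

lemma kap_sq_eig_le_one (B : Matrix (Fin p) (Fin q) ℝ) (j : Fin q) :
    kap B j ^ 2 * eig B j ≤ 1 := by
  unfold kap
  by_cases h : svals B j = 0
  · simp [h]
  · rw [if_neg h, ← sq_svals, inv_pow, inv_mul_cancel₀ (pow_ne_zero 2 h)]

lemma kap_mul_eig (B : Matrix (Fin p) (Fin q) ℝ) (j : Fin q) :
    kap B j * eig B j = svals B j := by
  unfold kap
  by_cases h : svals B j = 0
  · rw [if_pos h, h, zero_mul]
  · rw [if_neg h, ← sq_svals, sq, ← mul_assoc, inv_mul_cancel₀ h, one_mul]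

lemma witness_mulVec (B : Matrix (Fin p) (Fin q) ℝ) (x : Fin q → ℝ) :
    witness B *ᵥ x = ∑ j, (kap B j * (evec B j ⬝ᵥ x)) • uvec B j := by
  unfold witness
  rw [sum_mulVec]
  refine Finset.sum_congr rfl fun j _ => ?_
  rw [Matrix.smul_mulVec, vecMulVec_mulVec, smul_smul, mul_comm]

lemma witness_opNorm_le (B : Matrix (Fin p) (Fin q) ℝ) : opNorm (witness B) ≤ 1 := by
  refine opNorm_le_of _ zero_le_one fun x => ?_
  rw [witness_mulVec, one_mul]
  have hnsq : (∑ j, (kap B j * (evec B j ⬝ᵥ x)) • uvec B j) ⬝ᵥ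
      (∑ j, (kap B j * (evec B j ⬝ᵥ x)) • uvec B j) ≤ x ⬝ᵥ x := by
    rw [dot_sum_sum]
    have : ∀ j, ∑ l, (kap B j * (evec B j ⬝ᵥ x)) * (kap B l * (evec B l ⬝ᵥ x)) * (uvec B j ⬝ᵥ uvec B l)
        = (evec B j ⬝ᵥ x)^2 * (kap B j^2 * eig B j) := by
      intro j
      rw [Finset.sum_eq_single j]
      · rw [uvec_dot, if_pos rfl]; ring
      · intro l _ hl; rw [uvec_dot, if_neg (Ne.symm hl)]; ring
      · simp
    simp_rw [this]
    rw [← sum_dot_sq B x]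
    refine Finset.sum_le_sum fun j _ => ?_
    have hb := kap_sq_eig_le_one B j
    have h2 := sq_nonneg (evec B j ⬝ᵥ x)
    have h4 : 0 ≤ kap B j^2 * eig B j := mul_nonneg (sq_nonneg _) (eig_nonneg B j)
    nlinarith
  exact Real.sqrt_le_sqrt hnsq

lemma witness_mulVec_evec (B : Matrix (Fin p) (Fin q) ℝ) (l : Fin q) :
    witness B *ᵥ evec B l = kap B l • uvec B l := by
  rw [witness_mulVec]
  rw [Finset.sum_eq_single l]
  · rw [evec_dot, if_pos rfl, mul_one]
  · intro j _ hj; rw [evec_dot, if_neg hj, mul_zero, zero_smul]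
  · simp

lemma fip_witness_self (B : Matrix (Fin p) (Fin q) ℝ) : fip (witness B) B = nucNorm B := by
  rw [fip_expand]
  have : ∀ l, uvec B l ⬝ᵥ (witness B *ᵥ evec B l) = svals B l := by
    intro l
    rw [witness_mulVec_evec, dotProduct_smul, uvec_dot, if_pos rfl, smul_eq_mul,
      kap_mul_eig]
  simp_rw [this]
  rfl

lemma fip_le_nuc_of_op_le_one {W A : Matrix (Fin p) (Fin q) ℝ} (hW : opNorm W ≤ 1) :
    fip W A ≤ nucNorm A :=
  (fip_le_op_mul_nuc W A).trans (by
    have := nucNorm_nonneg A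
    nlinarith)

lemma neg_nuc_le_fip_of_op_le_one {W A : Matrix (Fin p) (Fin q) ℝ} (hW : opNorm W ≤ 1) :
    -nucNorm A ≤ fip W A := by
  have h := neg_fip_le W A
  have h2 : opNorm W * nucNorm A ≤ nucNorm A := by
    have := nucNorm_nonneg A
    nlinarith
  linarith

lemma nucNorm_add_le (A B : Matrix (Fin p) (Fin q) ℝ) :
    nucNorm (A + B) ≤ nucNorm A + nucNorm B := by
  have h := fip_witness_self (A + B)
  rw [fip_add_right] at h
  have h1 := fip_le_nuc_of_op_le_one (A := A) (witness_opNorm_le (A + B))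
  have h2 := fip_le_nuc_of_op_le_one (A := B) (witness_opNorm_le (A + B))
  rw [← h]
  linarith

lemma nuc_sum_vecMulVec_le {ι : Type*} (S : Finset ι) (x : ι → Fin p → ℝ) (y : ι → Fin q → ℝ) :
    nucNorm (∑ j ∈ S, Matrix.vecMulVec (x j) (y j)) ≤ ∑ j ∈ S, vnorm (x j) * vnorm (y j) := by
  set M := ∑ j ∈ S, Matrix.vecMulVec (x j) (y j) with hM
  rw [← fip_witness_self M, hM, fip_sum_right]
  refine Finset.sum_le_sum fun j _ => ?_
  rw [fip_vecMulVec_right]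
  calc x j ⬝ᵥ (witness M *ᵥ y j) ≤ vnorm (x j) * vnorm (witness M *ᵥ y j) :=
        dot_le_vnorm_mul_vnorm _ _
    _ ≤ vnorm (x j) * (opNorm (witness M) * vnorm (y j)) :=
        mul_le_mul_of_nonneg_left (vnorm_mulVec_le _ _) (vnorm_nonneg _)
    _ ≤ vnorm (x j) * (1 * vnorm (y j)) := by
        have hw := witness_opNorm_le M
        have h1 := vnorm_nonneg (y j)
        have h2 := vnorm_nonneg (x j)
        have h3 : opNorm (witness M) * vnorm (y j) ≤ 1 * vnorm (y j) :=
          mul_le_mul_of_nonneg_right hw h1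
        exact mul_le_mul_of_nonneg_left h3 h2
    _ = vnorm (x j) * vnorm (y j) := by ring

lemma nuc_vecMulVec_le (a : Fin p → ℝ) (b : Fin q → ℝ) :
    nucNorm (Matrix.vecMulVec a b) ≤ vnorm a * vnorm b := by
  have h := nuc_sum_vecMulVec_le {0} (fun _ : Fin 1 => a) (fun _ => b)
  simpa using h

lemma opNorm_sub_le (A B : Matrix (Fin p) (Fin q) ℝ) :
    opNorm (A - B) ≤ opNorm A + opNorm B := by
  refine opNorm_le_of _ (by have := opNorm_nonneg A; have := opNorm_nonneg B; linarith)
    fun v => ?_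
  have h : (A - B) *ᵥ v = A *ᵥ v + (-(B *ᵥ v)) := by
    rw [Matrix.sub_mulVec]; ring_nf
  rw [h]
  calc vnorm (A *ᵥ v + -(B *ᵥ v)) ≤ vnorm (A *ᵥ v) + vnorm (-(B *ᵥ v)) := vnorm_add_le _ _
    _ = vnorm (A *ᵥ v) + vnorm (B *ᵥ v) := by rw [vnorm_neg]
    _ ≤ opNorm A * vnorm v + opNorm B * vnorm v := by
        have := vnorm_mulVec_le A v; have := vnorm_mulVec_le B v; linarith
    _ = (opNorm A + opNorm B) * vnorm v := by ring

-- Section 7a: orthonormal families, projections, Bessel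
variable {k p q : ℕ}

lemma dot_proj_orth {ι : Type*} [DecidableEq ι] {S : Finset ι} {a : ι → Fin k → ℝ}
    (ha : ∀ j ∈ S, ∀ l ∈ S, a j ⬝ᵥ a l = if j = l then 1 else 0)
    {j : ι} (hj : j ∈ S) (y : Fin k → ℝ) :
    a j ⬝ᵥ (y - ∑ l ∈ S, (a l ⬝ᵥ y) • a l) = 0 := by
  rw [dotProduct_sub, dot_sum_right]
  have : ∀ l ∈ S, a j ⬝ᵥ ((a l ⬝ᵥ y) • a l) = if l = j then a j ⬝ᵥ y else 0 := by
    intro l hl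
    rw [dotProduct_smul, smul_eq_mul, ha j hj l hl]
    by_cases h : l = j
    · subst h; simp
    · rw [if_neg (Ne.symm h), if_neg h, mul_zero]
  rw [Finset.sum_congr rfl this, Finset.sum_ite_eq' S j (fun _ => a j ⬝ᵥ y), if_pos hj, sub_self]

lemma proj_fix {ι : Type*} [DecidableEq ι] {S : Finset ι} {a : ι → Fin k → ℝ}
    (ha : ∀ j ∈ S, ∀ l ∈ S, a j ⬝ᵥ a l = if j = l then 1 else 0)
    {j : ι} (hj : j ∈ S) :
    ∑ l ∈ S, (a l ⬝ᵥ a j) • a l = a j := by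
  have : ∀ l ∈ S, (a l ⬝ᵥ a j) • a l = if l = j then a j else 0 := by
    intro l hl
    rw [ha l hl j hj]
    by_cases h : l = j
    · subst h; simp
    · simp [h]
  rw [Finset.sum_congr rfl this, Finset.sum_ite_eq' S j (fun _ => a j), if_pos hj]

lemma dot_proj_sq {ι : Type*} [DecidableEq ι] {S : Finset ι} {a : ι → Fin k → ℝ}
    (ha : ∀ j ∈ S, ∀ l ∈ S, a j ⬝ᵥ a l = if j = l then 1 else 0) (y : Fin k → ℝ) :
    (∑ l ∈ S, (a l ⬝ᵥ y) • a l) ⬝ᵥ (∑ l ∈ S, (a l ⬝ᵥ y) • a l)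
      = ∑ l ∈ S, (a l ⬝ᵥ y)^2 := by
  rw [dot_sum_sum]
  have : ∀ j ∈ S, ∑ l ∈ S, (a j ⬝ᵥ y) * (a l ⬝ᵥ y) * (a j ⬝ᵥ a l)
      = (a j ⬝ᵥ y)^2 := by
    intro j hj
    have h2 : ∀ l ∈ S, (a j ⬝ᵥ y) * (a l ⬝ᵥ y) * (a j ⬝ᵥ a l)
        = if l = j then (a j ⬝ᵥ y)^2 else 0 := by
      intro l hl
      rw [ha j hj l hl]
      by_cases h : l = j
      · subst h; simp [pow_two]
      · rw [if_neg (Ne.symm h), if_neg h, mul_zero]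
    rw [Finset.sum_congr rfl h2, Finset.sum_ite_eq' S j _, if_pos hj]
  exact Finset.sum_congr rfl this

lemma dot_y_proj {ι : Type*} {S : Finset ι} (a : ι → Fin k → ℝ) (y : Fin k → ℝ) :
    y ⬝ᵥ (∑ l ∈ S, (a l ⬝ᵥ y) • a l) = ∑ l ∈ S, (a l ⬝ᵥ y)^2 := by
  rw [dot_sum_right]
  refine Finset.sum_congr rfl fun l _ => ?_
  rw [dotProduct_smul, smul_eq_mul, dotProduct_comm, pow_two]

lemma nsq_sub_proj {ι : Type*} [DecidableEq ι] {S : Finset ι} {a : ι → Fin k → ℝ}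
    (ha : ∀ j ∈ S, ∀ l ∈ S, a j ⬝ᵥ a l = if j = l then 1 else 0) (y : Fin k → ℝ) :
    (y - ∑ l ∈ S, (a l ⬝ᵥ y) • a l) ⬝ᵥ (y - ∑ l ∈ S, (a l ⬝ᵥ y) • a l)
      = y ⬝ᵥ y - ∑ l ∈ S, (a l ⬝ᵥ y)^2 := by
  set Pz := ∑ l ∈ S, (a l ⬝ᵥ y) • a l with hPz
  rw [dotProduct_sub, sub_dotProduct, sub_dotProduct]
  rw [hPz, dot_y_proj, dot_proj_sq ha]
  have : (∑ l ∈ S, (a l ⬝ᵥ y) • a l) ⬝ᵥ y = ∑ l ∈ S, (a l ⬝ᵥ y)^2 := by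
    rw [dotProduct_comm, dot_y_proj]
  rw [this]; ring

lemma vnorm_sub_proj_le {ι : Type*} [DecidableEq ι] {S : Finset ι} {a : ι → Fin k → ℝ}
    (ha : ∀ j ∈ S, ∀ l ∈ S, a j ⬝ᵥ a l = if j = l then 1 else 0) (y : Fin k → ℝ) :
    vnorm (y - ∑ l ∈ S, (a l ⬝ᵥ y) • a l) ≤ vnorm y := by
  apply Real.sqrt_le_sqrt
  rw [nsq_sub_proj ha]
  have : 0 ≤ ∑ l ∈ S, (a l ⬝ᵥ y)^2 := Finset.sum_nonneg fun l _ => sq_nonneg _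
  linarith

lemma bessel_one {ι : Type*} [DecidableEq ι] {S : Finset ι} {a : ι → Fin k → ℝ}
    (ha : ∀ j ∈ S, ∀ l ∈ S, a j ⬝ᵥ a l = if j = l then 1 else 0) (y : Fin k → ℝ) :
    ∑ l ∈ S, (a l ⬝ᵥ y)^2 ≤ y ⬝ᵥ y := by
  have h := dot_self_nonneg (y - ∑ l ∈ S, (a l ⬝ᵥ y) • a l)
  rw [nsq_sub_proj ha] at h
  linarith

lemma bessel_two {ιa ιb : Type*} [DecidableEq ιa] [DecidableEq ιb] {Sa : Finset ιa} {Sb : Finset ιb}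
    {a : ιa → Fin k → ℝ} {b : ιb → Fin k → ℝ}
    (ha : ∀ j ∈ Sa, ∀ l ∈ Sa, a j ⬝ᵥ a l = if j = l then 1 else 0)
    (hb : ∀ j ∈ Sb, ∀ l ∈ Sb, b j ⬝ᵥ b l = if j = l then 1 else 0)
    (hab : ∀ j ∈ Sa, ∀ l ∈ Sb, a j ⬝ᵥ b l = 0) (x : Fin k → ℝ) :
    ∑ j ∈ Sa, (a j ⬝ᵥ x)^2 + ∑ l ∈ Sb, (b l ⬝ᵥ x)^2 ≤ x ⬝ᵥ x := by
  set y := x - ∑ l ∈ Sa, (a l ⬝ᵥ x) • a l with hy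
  -- b l ⬝ᵥ y = b l ⬝ᵥ x  since b ⊥ a's
  have hby : ∀ l ∈ Sb, b l ⬝ᵥ y = b l ⬝ᵥ x := by
    intro l hl
    rw [hy, dotProduct_sub, dot_sum_right]
    have : ∀ j ∈ Sa, b l ⬝ᵥ ((a j ⬝ᵥ x) • a j) = 0 := by
      intro j hj
      rw [dotProduct_smul, dotProduct_comm (b l) (a j), hab j hj l hl, smul_eq_mul, mul_zero]
    rw [Finset.sum_congr rfl this, Finset.sum_const_zero, sub_zero]
  have h1 : ∑ l ∈ Sb, (b l ⬝ᵥ y)^2 ≤ y ⬝ᵥ y := bessel_one hb y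
  have h2 : y ⬝ᵥ y = x ⬝ᵥ x - ∑ j ∈ Sa, (a j ⬝ᵥ x)^2 := nsq_sub_proj ha x
  have h3 : ∑ l ∈ Sb, (b l ⬝ᵥ y)^2 = ∑ l ∈ Sb, (b l ⬝ᵥ x)^2 :=
    Finset.sum_congr rfl fun l hl => by rw [hby l hl]
  linarith [h3 ▸ h1, h2]

lemma vecMulVec_mul (a : Fin p → ℝ) (b : Fin q → ℝ) {r : ℕ} (M : Matrix (Fin q) (Fin r) ℝ) :
    Matrix.vecMulVec a b * M = Matrix.vecMulVec a (Mᵀ *ᵥ b) := by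
  ext i j
  simp only [Matrix.mul_apply, Matrix.vecMulVec_apply, Matrix.mulVec, dotProduct,
    Matrix.transpose_apply, Finset.mul_sum]
  exact Finset.sum_congr rfl fun l _ => by ring

lemma mul_vecMulVec {r : ℕ} (M : Matrix (Fin p) (Fin q) ℝ) (b : Fin q → ℝ) (c : Fin r → ℝ) :
    M * Matrix.vecMulVec b c = Matrix.vecMulVec (M *ᵥ b) c := by
  ext i j
  simp only [Matrix.mul_apply, Matrix.vecMulVec_apply, Matrix.mulVec, dotProduct, Finset.sum_mul]
  exact Finset.sum_congr rfl fun l _ => by ring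

lemma fip_sum_left {ι : Type*} (S : Finset ι) (f : ι → Matrix (Fin p) (Fin q) ℝ)
    (A : Matrix (Fin p) (Fin q) ℝ) : fip (∑ j ∈ S, f j) A = ∑ j ∈ S, fip (f j) A := by
  rw [fip_comm, fip_sum_right]
  exact Finset.sum_congr rfl fun j _ => fip_comm _ _

-- Section 8: decomposition lemma
variable {k p q : ℕ}

lemma fip_add_left (A B C : Matrix (Fin p) (Fin q) ℝ) :
    fip (A + B) C = fip A C + fip B C := by
  rw [fip_comm, fip_add_right, fip_comm C A, fip_comm C B]

lemma nsq_sum_orthonormal {ι : Type*} [DecidableEq ι] {S : Finset ι} {a : ι → Fin k → ℝ}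
    (ha : ∀ j ∈ S, ∀ l ∈ S, a j ⬝ᵥ a l = if j = l then 1 else 0) (c : ι → ℝ) :
    (∑ j ∈ S, c j • a j) ⬝ᵥ (∑ j ∈ S, c j • a j) = ∑ j ∈ S, (c j)^2 := by
  rw [dot_sum_sum]
  refine Finset.sum_congr rfl fun j hj => ?_
  have h2 : ∀ l ∈ S, c j * c l * (a j ⬝ᵥ a l) = if l = j then (c j)^2 else 0 := by
    intro l hl
    rw [ha j hj l hl]
    by_cases h : l = j
    · subst h; simp [pow_two]
    · rw [if_neg (Ne.symm h), if_neg h, mul_zero]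
  rw [Finset.sum_congr rfl h2, Finset.sum_ite_eq' S j _, if_pos hj]

lemma nsq_sum_uvec (B : Matrix (Fin p) (Fin q) ℝ) (c : Fin q → ℝ) :
    (∑ j, c j • uvec B j) ⬝ᵥ (∑ j, c j • uvec B j) = ∑ j, (c j)^2 * eig B j := by
  rw [dot_sum_sum]
  refine Finset.sum_congr rfl fun j _ => ?_
  rw [Finset.sum_eq_single j]
  · rw [uvec_dot, if_pos rfl]; ring
  · intro l _ hl; rw [uvec_dot, if_neg (Ne.symm hl)]; ring
  · simp

lemma decomp (Θs Δ : Matrix (Fin p) (Fin q) ℝ) (S : Finset (Fin q))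
    (hS : ∀ j ∈ S, svals Θs j ≠ 0) :
    ∃ Δ1 Δ2 : Matrix (Fin p) (Fin q) ℝ,
      Δ = Δ1 + Δ2 ∧
      nucNorm Δ1 ≤ 2 * S.card * opNorm Δ ∧
      nucNorm Θs - 2 * (∑ j ∈ Sᶜ, svals Θs j) + nucNorm Δ2 - nucNorm Δ1
        ≤ nucNorm (Θs + Δ) := by
  classical
  set ev : Fin q → Fin q → ℝ := evec Θs with hev
  set uh : Fin q → Fin p → ℝ := fun j => kap Θs j • uvec Θs j with huh
  have hkap2 : ∀ j ∈ S, kap Θs j * kap Θs j * eig Θs j = 1 := by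
    intro j hj
    have h : kap Θs j = (svals Θs j)⁻¹ := by unfold kap; rw [if_neg (hS j hj)]
    rw [h, ← sq_svals, pow_two]
    field_simp
    exact div_self (hS j hj)
  have huh_dot : ∀ j ∈ S, ∀ l ∈ S, uh j ⬝ᵥ uh l = if j = l then 1 else 0 := by
    intro j hj l hl
    show (kap Θs j • uvec Θs j) ⬝ᵥ (kap Θs l • uvec Θs l) = _
    rw [smul_dotProduct, dotProduct_smul, uvec_dot, smul_eq_mul, smul_eq_mul]
    by_cases h : j = l
    · subst h
      rw [if_pos rfl, if_pos rfl, ← mul_assoc, hkap2 j hj]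
    · rw [if_neg h, if_neg h, mul_zero, mul_zero]
  have hev_dot : ∀ j ∈ S, ∀ l ∈ S, ev j ⬝ᵥ ev l = if j = l then 1 else 0 :=
    fun j _ l _ => evec_dot Θs j l
  have hvnorm_uh : ∀ j ∈ S, vnorm (uh j) = 1 := by
    intro j hj
    apply vnorm_eq_of_dot zero_le_one
    rw [huh_dot j hj j hj, if_pos rfl, one_pow]
  set P : Matrix (Fin p) (Fin p) ℝ := ∑ j ∈ S, Matrix.vecMulVec (uh j) (uh j) with hP
  set Q : Matrix (Fin q) (Fin q) ℝ := ∑ j ∈ S, Matrix.vecMulVec (ev j) (ev j) with hQ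
  have hPy : ∀ y, P *ᵥ y = ∑ j ∈ S, (uh j ⬝ᵥ y) • uh j := by
    intro y; rw [hP, sum_mulVec]
    exact Finset.sum_congr rfl fun j _ => vecMulVec_mulVec _ _ _
  have hQy : ∀ y, Q *ᵥ y = ∑ j ∈ S, (ev j ⬝ᵥ y) • ev j := by
    intro y; rw [hQ, sum_mulVec]
    exact Finset.sum_congr rfl fun j _ => vecMulVec_mulVec _ _ _
  set Δ2 := Δ - P * Δ - Δ * Q + P * (Δ * Q) with hΔ2
  set Δ1 := P * Δ + Δ * Q - P * (Δ * Q) with hΔ1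
  have hsplit : Δ = Δ1 + Δ2 := by rw [hΔ1, hΔ2]; abel
  have hΔ2v : ∀ y, Δ2 *ᵥ y
      = (Δ *ᵥ (y - Q *ᵥ y)) - P *ᵥ (Δ *ᵥ (y - Q *ᵥ y)) := by
    intro y
    simp only [hΔ2, Matrix.add_mulVec, Matrix.sub_mulVec, Matrix.mulVec_sub,
      ← Matrix.mulVec_mulVec]
    abel
  have hF2 : ∀ j ∈ S, ∀ y, uh j ⬝ᵥ (Δ2 *ᵥ y) = 0 := by
    intro j hj y
    rw [hΔ2v, hPy]
    exact dot_proj_orth huh_dot hj _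
  have hF3 : ∀ j ∈ S, Δ2 *ᵥ ev j = 0 := by
    intro j hj
    rw [hΔ2v, hQy]
    have h0 : ev j - ∑ l ∈ S, (ev l ⬝ᵥ ev j) • ev l = 0 := by
      rw [proj_fix hev_dot hj]; simp
    rw [h0, Matrix.mulVec_zero, Matrix.mulVec_zero, sub_zero]
  have hF5 : ∀ j ∈ S, ∀ kk, svals Δ2 kk ≠ 0 → ev j ⬝ᵥ evec Δ2 kk = 0 := by
    intro j hj kk hk
    have heig : eig Δ2 kk ≠ 0 := by rw [← sq_svals]; exact pow_ne_zero 2 hk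
    have h1 : evec Δ2 kk = (eig Δ2 kk)⁻¹ • ((Δ2ᴴ * Δ2) *ᵥ evec Δ2 kk) := by
      rw [H_mulVec, smul_smul, inv_mul_cancel₀ heig, one_smul]
    rw [h1, dotProduct_smul, smul_eq_mul]
    rw [← Matrix.mulVec_mulVec, dot_mulVec_eq, Matrix.conjTranspose_eq_transpose_of_trivial,
      Matrix.transpose_transpose, hF3 j hj, zero_dotProduct, mul_zero]
  set K : Finset (Fin q) := Finset.univ.filter (fun kk => svals Δ2 kk ≠ 0) with hK
  set W0 := (∑ j ∈ S, Matrix.vecMulVec (uh j) (ev j)) + witness Δ2 with hW0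
  have hW0v : ∀ x, W0 *ᵥ x = (∑ j ∈ S, (ev j ⬝ᵥ x) • uh j)
      + ∑ kk, (kap Δ2 kk * (evec Δ2 kk ⬝ᵥ x)) • uvec Δ2 kk := by
    intro x
    rw [hW0, Matrix.add_mulVec, sum_mulVec, witness_mulVec]
    congr 1
    exact Finset.sum_congr rfl fun j _ => vecMulVec_mulVec _ _ _
  have hW0op : opNorm W0 ≤ 1 := by
    refine opNorm_le_of _ zero_le_one fun x => ?_
    rw [hW0v, one_mul]
    set Avec := ∑ j ∈ S, (ev j ⬝ᵥ x) • uh j with hAvec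
    set Bvec := ∑ kk, (kap Δ2 kk * (evec Δ2 kk ⬝ᵥ x)) • uvec Δ2 kk with hBvec
    have hnsqA : Avec ⬝ᵥ Avec = ∑ j ∈ S, (ev j ⬝ᵥ x)^2 := nsq_sum_orthonormal huh_dot _
    have hnsqB : Bvec ⬝ᵥ Bvec ≤ ∑ kk ∈ K, (evec Δ2 kk ⬝ᵥ x)^2 := by
      rw [hBvec, nsq_sum_uvec]
      have hle : ∀ kk ∈ Finset.univ, (kap Δ2 kk * (evec Δ2 kk ⬝ᵥ x))^2 * eig Δ2 kk
          ≤ if kk ∈ K then (evec Δ2 kk ⬝ᵥ x)^2 else 0 := by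
        intro kk _
        by_cases h : svals Δ2 kk = 0
        · have hkap0 : kap Δ2 kk = 0 := by unfold kap; rw [if_pos h]
          have hKn : kk ∉ K := by rw [hK]; simp [h]
          rw [if_neg hKn, hkap0]
          simp
        · have hKy : kk ∈ K := by rw [hK]; simp [h]
          rw [if_pos hKy]
          have hb := kap_sq_eig_le_one Δ2 kk
          have h2 := sq_nonneg (evec Δ2 kk ⬝ᵥ x)
          have h4 : 0 ≤ kap Δ2 kk^2 * eig Δ2 kk := mul_nonneg (sq_nonneg _) (eig_nonneg Δ2 kk)
          calc (kap Δ2 kk * (evec Δ2 kk ⬝ᵥ x))^2 * eig Δ2 kk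
              = (evec Δ2 kk ⬝ᵥ x)^2 * (kap Δ2 kk^2 * eig Δ2 kk) := by ring
            _ ≤ (evec Δ2 kk ⬝ᵥ x)^2 * 1 := mul_le_mul_of_nonneg_left hb h2
            _ = (evec Δ2 kk ⬝ᵥ x)^2 := mul_one _
      calc ∑ kk, (kap Δ2 kk * (evec Δ2 kk ⬝ᵥ x))^2 * eig Δ2 kk
          ≤ ∑ kk, if kk ∈ K then (evec Δ2 kk ⬝ᵥ x)^2 else 0 := Finset.sum_le_sum hle
        _ = ∑ kk ∈ K, (evec Δ2 kk ⬝ᵥ x)^2 := by rw [Finset.sum_ite_mem, Finset.univ_inter]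
    have hcross : Avec ⬝ᵥ Bvec = 0 := by
      rw [hAvec, hBvec, dot_sum_sum]
      refine Finset.sum_eq_zero fun j hj => Finset.sum_eq_zero fun kk _ => ?_
      have : uh j ⬝ᵥ uvec Δ2 kk = 0 := by
        unfold uvec
        exact hF2 j hj _
      rw [this, mul_zero]
    have hbes : ∑ j ∈ S, (ev j ⬝ᵥ x)^2 + ∑ kk ∈ K, (evec Δ2 kk ⬝ᵥ x)^2 ≤ x ⬝ᵥ x := by
      refine bessel_two hev_dot (fun j _ l _ => evec_dot Δ2 j l) ?_ x
      intro j hj kk hkk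
      have hk : svals Δ2 kk ≠ 0 := by
        rw [hK] at hkk; simpa using hkk
      exact hF5 j hj kk hk
    have hnsq : (Avec + Bvec) ⬝ᵥ (Avec + Bvec) ≤ x ⬝ᵥ x := by
      rw [add_dotProduct, dotProduct_add, dotProduct_add]
      have hBA : Bvec ⬝ᵥ Avec = 0 := by rw [dotProduct_comm]; exact hcross
      rw [hcross, hBA, hnsqA]
      linarith [hnsqB, hbes]
    exact Real.sqrt_le_sqrt hnsq
  -- W0 acting on ev j for j ∈ S
  have hW0ev : ∀ j ∈ S, W0 *ᵥ ev j = uh j := by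
    intro j hj
    rw [hW0v]
    have h1 : ∑ l ∈ S, (ev l ⬝ᵥ ev j) • uh l = uh j := by
      have : ∀ l ∈ S, (ev l ⬝ᵥ ev j) • uh l = if l = j then uh j else 0 := by
        intro l hl
        rw [hev_dot l hl j hj]
        by_cases h : l = j
        · subst h; simp
        · simp [h]
      rw [Finset.sum_congr rfl this, Finset.sum_ite_eq' S j _, if_pos hj]
    have h2 : ∑ kk, (kap Δ2 kk * (evec Δ2 kk ⬝ᵥ ev j)) • uvec Δ2 kk = 0 := by
      refine Finset.sum_eq_zero fun kk _ => ?_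
      by_cases h : svals Δ2 kk = 0
      · have hkap0 : kap Δ2 kk = 0 := by unfold kap; rw [if_pos h]
        rw [hkap0, zero_mul, zero_smul]
      · have := hF5 j hj kk h
        rw [dotProduct_comm] at this
        rw [this, mul_zero, zero_smul]
    rw [h1, h2, add_zero]
  -- fip identities
  have fipAS : fip W0 (∑ j ∈ S, Matrix.vecMulVec (uvec Θs j) (ev j)) = ∑ j ∈ S, svals Θs j := by
    rw [fip_sum_right]
    refine Finset.sum_congr rfl fun j hj => ?_
    rw [fip_vecMulVec_right, hW0ev j hj]
    show uvec Θs j ⬝ᵥ (kap Θs j • uvec Θs j) = _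
    rw [dotProduct_smul, uvec_dot, if_pos rfl, smul_eq_mul, kap_mul_eig]
  have fipD2 : fip W0 Δ2 = nucNorm Δ2 := by
    rw [hW0, fip_add_left, fip_witness_self, fip_sum_left]
    have : ∀ j ∈ S, fip (Matrix.vecMulVec (uh j) (ev j)) Δ2 = 0 := by
      intro j hj
      rw [fip_comm, fip_vecMulVec_right, hF3 j hj, dotProduct_zero]
    rw [Finset.sum_congr rfl this, Finset.sum_const_zero, zero_add]
  have fipE : -(∑ j ∈ Sᶜ, svals Θs j)
      ≤ fip W0 (∑ j ∈ Sᶜ, Matrix.vecMulVec (uvec Θs j) (ev j)) := by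
    rw [fip_sum_right]
    have key : ∀ j ∈ Sᶜ, -(svals Θs j) ≤ fip W0 (Matrix.vecMulVec (uvec Θs j) (ev j)) := by
      intro j _
      rw [fip_vecMulVec_right]
      have h1 : -(uvec Θs j ⬝ᵥ (W0 *ᵥ ev j)) ≤ vnorm (uvec Θs j) * vnorm (W0 *ᵥ ev j) := by
        have h := dot_le_vnorm_mul_vnorm (-(uvec Θs j)) (W0 *ᵥ ev j)
        rw [neg_dotProduct, vnorm_neg] at h
        exact h
      have h2 : vnorm (W0 *ᵥ ev j) ≤ 1 := by
        have h := vnorm_mulVec_le W0 (ev j)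
        have hv1 : vnorm (ev j) = 1 := vnorm_evec Θs j
        rw [hv1, mul_one] at h
        exact h.trans hW0op
      rw [vnorm_uvec] at h1
      have h3 : vnorm (uvec Θs j) = svals Θs j := vnorm_uvec Θs j
      have h4 := svals_nonneg Θs j
      nlinarith [h1, h2]
    calc -(∑ j ∈ Sᶜ, svals Θs j) = ∑ j ∈ Sᶜ, -(svals Θs j) := by rw [← Finset.sum_neg_distrib]
      _ ≤ ∑ j ∈ Sᶜ, fip W0 (Matrix.vecMulVec (uvec Θs j) (ev j)) := Finset.sum_le_sum key
  have fipD1 : -(nucNorm Δ1) ≤ fip W0 Δ1 := neg_nuc_le_fip_of_op_le_one hW0op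
  have hsplitΘ : Θs = (∑ j ∈ S, Matrix.vecMulVec (uvec Θs j) (ev j))
      + (∑ j ∈ Sᶜ, Matrix.vecMulVec (uvec Θs j) (ev j)) := by
    rw [Finset.sum_add_sum_compl]
    exact matrix_eq_sum_vecMulVec Θs
  have hnucΘ : nucNorm Θs = (∑ j ∈ S, svals Θs j) + ∑ j ∈ Sᶜ, svals Θs j :=
    (Finset.sum_add_sum_compl S _).symm
  have hmain : fip W0 (Θs + Δ) ≤ nucNorm (Θs + Δ) := fip_le_nuc_of_op_le_one hW0op
  have hexpand : fip W0 (Θs + Δ)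
      = fip W0 (∑ j ∈ S, Matrix.vecMulVec (uvec Θs j) (ev j))
      + fip W0 (∑ j ∈ Sᶜ, Matrix.vecMulVec (uvec Θs j) (ev j))
      + fip W0 Δ1 + fip W0 Δ2 := by
    conv_lhs => rw [hsplitΘ, hsplit]
    rw [fip_add_right, fip_add_right, fip_add_right]
    ring
  -- nuc Δ1 bound
  have hnucD1 : nucNorm Δ1 ≤ 2 * S.card * opNorm Δ := by
    have e1 : P * Δ = ∑ j ∈ S, Matrix.vecMulVec (uh j) (Δᵀ *ᵥ uh j) := by
      rw [hP, Matrix.sum_mul]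
      exact Finset.sum_congr rfl fun j _ => vecMulVec_mul _ _ _
    have e2 : Δ1 = P * Δ + (Δ - P * Δ) * Q := by
      rw [hΔ1, Matrix.sub_mul, ← Matrix.mul_assoc]
      abel
    have e3 : (Δ - P * Δ) * Q = ∑ j ∈ S, Matrix.vecMulVec ((Δ - P * Δ) *ᵥ ev j) (ev j) := by
      rw [hQ, Matrix.mul_sum]
      exact Finset.sum_congr rfl fun j _ => mul_vecMulVec _ _ _
    have b1 : nucNorm (P * Δ) ≤ S.card * opNorm Δ := by
      rw [e1]
      refine (nuc_sum_vecMulVec_le S _ _).trans ?_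
      have : ∀ j ∈ S, vnorm (uh j) * vnorm (Δᵀ *ᵥ uh j) ≤ opNorm Δ := by
        intro j hj
        rw [hvnorm_uh j hj, one_mul]
        have h := vnorm_mulVec_le Δᵀ (uh j)
        rw [hvnorm_uh j hj, mul_one] at h
        exact h.trans (opNorm_transpose_le Δ)
      calc ∑ j ∈ S, vnorm (uh j) * vnorm (Δᵀ *ᵥ uh j) ≤ ∑ j ∈ S, opNorm Δ :=
            Finset.sum_le_sum this
        _ = S.card * opNorm Δ := by rw [Finset.sum_const, nsmul_eq_mul]
    have b2 : nucNorm ((Δ - P * Δ) * Q) ≤ S.card * opNorm Δ := by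
      rw [e3]
      refine (nuc_sum_vecMulVec_le S _ _).trans ?_
      have : ∀ j ∈ S, vnorm ((Δ - P * Δ) *ᵥ ev j) * vnorm (ev j) ≤ opNorm Δ := by
        intro j _
        rw [vnorm_evec, mul_one]
        have h0 : (Δ - P * Δ) *ᵥ ev j = (Δ *ᵥ ev j) - ∑ l ∈ S, (uh l ⬝ᵥ (Δ *ᵥ ev j)) • uh l := by
          rw [Matrix.sub_mulVec, ← Matrix.mulVec_mulVec, hPy]
        rw [h0]
        refine (vnorm_sub_proj_le huh_dot _).trans ?_
        have h := vnorm_mulVec_le Δ (ev j)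
        rw [vnorm_evec, mul_one] at h
        exact h
      calc ∑ j ∈ S, vnorm ((Δ - P * Δ) *ᵥ ev j) * vnorm (ev j) ≤ ∑ j ∈ S, opNorm Δ :=
            Finset.sum_le_sum this
        _ = S.card * opNorm Δ := by rw [Finset.sum_const, nsmul_eq_mul]
    calc nucNorm Δ1 ≤ nucNorm (P * Δ) + nucNorm ((Δ - P * Δ) * Q) := by
          rw [e2]; exact nucNorm_add_le _ _
      _ ≤ 2 * S.card * opNorm Δ := by linarith
  exact ⟨Δ1, Δ2, hsplit, hnucD1, by
    rw [hnucΘ]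
    have := fipAS
    linarith [hmain, hexpand, fipE, fipD1, fipD2]⟩

-- Section 9: loss expansion and first-order optimality
variable {k p q : ℕ}

lemma fip_sub_right (A B C : Matrix (Fin p) (Fin q) ℝ) :
    fip A (B - C) = fip A B - fip A C := by
  unfold fip
  rw [← Finset.sum_sub_distrib]
  refine Finset.sum_congr rfl fun i _ => ?_
  rw [← Finset.sum_sub_distrib]
  refine Finset.sum_congr rfl fun j _ => ?_
  simp [Matrix.sub_apply, mul_sub]

lemma fip_sub_left (A B C : Matrix (Fin p) (Fin q) ℝ) :
    fip (A - B) C = fip A C - fip B C := by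
  rw [fip_comm, fip_sub_right, fip_comm C A, fip_comm C B]

lemma smul_vecMulVec (c : ℝ) (a : Fin p → ℝ) (b : Fin q → ℝ) :
    c • Matrix.vecMulVec a b = Matrix.vecMulVec (c • a) b := by
  ext i j
  simp [Matrix.vecMulVec_apply, mul_assoc]

lemma frobNorm_sq (A : Matrix (Fin p) (Fin q) ℝ) : frobNorm A ^ 2 = fip A A := by
  have h : ∑ i, ∑ j, (A i j)^2 = fip A A := by
    unfold fip
    exact Finset.sum_congr rfl fun i _ => Finset.sum_congr rfl fun j _ => by rw [pow_two]
  rw [frobNorm, Real.sq_sqrt (by rw [h]; exact fip_self_nonneg A), h]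

lemma loss_expand {N n d : ℕ} (hN : 0 < N) (X : Matrix (Fin N) (Fin n) ℝ)
    (Z : Matrix (Fin N) (Fin d) ℝ) (Θ Δ : Matrix (Fin d) (Fin n) ℝ) :
    lossFn X Z (Θ + Δ) = lossFn X Z Θ + fip (gradFn X Z Θ) Δ
      + (1 / (2 * (N:ℝ))) * fip (Z * Δ) (Z * Δ) := by
  have hNR : (N:ℝ) ≠ 0 := Nat.cast_ne_zero.mpr hN.ne'
  unfold lossFn gradFn
  rw [frobNorm_sq, frobNorm_sq]
  have h1 : X - Z * (Θ + Δ) = (X - Z * Θ) - Z * Δ := by rw [Matrix.mul_add]; abel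
  rw [h1]
  have h2 : fip ((X - Z*Θ) - Z*Δ) ((X - Z*Θ) - Z*Δ)
      = fip (X - Z*Θ) (X - Z*Θ) - 2 * fip (Z*Δ) (X - Z*Θ) + fip (Z*Δ) (Z*Δ) := by
    rw [fip_sub_left (X - Z*Θ) (Z*Δ) ((X - Z*Θ) - Z*Δ),
      fip_sub_right (X - Z*Θ) (X - Z*Θ) (Z*Δ),
      fip_sub_right (Z*Δ) (X - Z*Θ) (Z*Δ), fip_comm (X - Z*Θ) (Z*Δ)]
    ring
  rw [h2]
  have h3 : fip ((1/(N:ℝ)) • (Zᵀ * (Z*Θ - X))) Δ = -((1/(N:ℝ)) * fip (Z*Δ) (X - Z*Θ)) := by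
    rw [fip_smul_left, fip_transpose_mul]
    have : Z * Θ - X = -(X - Z * Θ) := by abel
    rw [this, fip_neg_left, fip_comm]
    ring
  rw [h3]
  field_simp
  ring

lemma grad_opNorm_le {N n d : ℕ} (hN : 0 < N) (X : Matrix (Fin N) (Fin n) ℝ)
    (Z : Matrix (Fin N) (Fin d) ℝ) (lam : ℝ) (hlam0 : 0 < lam)
    (Θhat : Matrix (Fin d) (Fin n) ℝ)
    (hmin : ∀ Θ : Matrix (Fin d) (Fin n) ℝ,
      lossFn X Z Θhat + lam * nucNorm Θhat ≤ lossFn X Z Θ + lam * nucNorm Θ) :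
    opNorm (gradFn X Z Θhat) ≤ lam := by
  set G := gradFn X Z Θhat with hG
  rcases isEmpty_or_nonempty (Fin n) with h|h
  · rw [opNorm, Real.iSup_of_isEmpty]; exact le_of_lt hlam0
  refine ciSup_le fun j => ?_
  by_cases hσ : svals G j = 0
  · rw [hσ]; exact le_of_lt hlam0
  have hκ : kap G j = (svals G j)⁻¹ := by unfold kap; rw [if_neg hσ]
  set u : Fin d → ℝ := kap G j • uvec G j with hu
  set v : Fin n → ℝ := evec G j with hv
  set E := Matrix.vecMulVec u v with hE
  have hvnorm_u : vnorm u = 1 := by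
    rw [hu, vnorm_smul, vnorm_uvec, abs_of_nonneg (kap_nonneg G j), hκ,
      inv_mul_cancel₀ hσ]
  have hfipGE : fip G E = svals G j := by
    rw [hE, fip_vecMulVec_right, hv]
    show u ⬝ᵥ uvec G j = _
    rw [hu, smul_dotProduct, uvec_dot, if_pos rfl, smul_eq_mul, kap_mul_eig]
  set C := (1/(2*(N:ℝ))) * fip (Z * E) (Z * E) with hC
  have hC0 : 0 ≤ C := by
    rw [hC]
    have : (0:ℝ) ≤ 1/(2*(N:ℝ)) := by positivity
    exact mul_nonneg this (fip_self_nonneg _)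
  have key : ∀ t : ℝ, 0 < t → svals G j ≤ lam + t * C := by
    intro t ht
    have h0 := hmin (Θhat + (-t) • E)
    rw [loss_expand hN] at h0
    have e1 : fip G ((-t) • E) = -t * svals G j := by
      rw [fip_comm, fip_smul_left, fip_comm E G, hfipGE]
    have e2 : Z * ((-t) • E) = (-t) • (Z * E) := by
      rw [Matrix.mul_smul]
    have e3 : fip (Z * ((-t) • E)) (Z * ((-t) • E)) = t^2 * fip (Z*E) (Z*E) := by
      rw [e2, fip_smul_left, fip_comm, fip_smul_left, fip_comm]
      ring
    have e4 : nucNorm (Θhat + (-t) • E) ≤ nucNorm Θhat + t := by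
      refine (nucNorm_add_le _ _).trans ?_
      have : nucNorm ((-t) • E) ≤ t := by
        rw [hE, smul_vecMulVec]
        refine (nuc_vecMulVec_le _ _).trans ?_
        rw [vnorm_smul, hvnorm_u, mul_one, abs_neg, abs_of_pos ht, hv, vnorm_evec, mul_one]
      linarith
    rw [← hG, e1, e3] at h0
    have e5 : lam * nucNorm (Θhat + (-t) • E) ≤ lam * (nucNorm Θhat + t) :=
      mul_le_mul_of_nonneg_left e4 (le_of_lt hlam0)
    -- h0 : L + lam nuc ≤ L + (-t σ) + (1/2N) t² fip + lam nuc(pert)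
    have h6 : 0 ≤ -t * svals G j + t^2 * C + lam * t := by
      rw [hC]
      nlinarith [h0, e5]
    nlinarith [h6, ht]
  by_contra hcon
  push_neg at hcon
  have hε : 0 < (svals G j - lam) / (C + 1) := by
    apply div_pos (by linarith) (by linarith)
  have := key ((svals G j - lam) / (C + 1)) hε
  have hC1 : 0 < C + 1 := by linarith
  rw [div_mul_eq_mul_div] at this
  have h7 : (svals G j - lam) * C / (C + 1) < svals G j - lam := by
    rw [div_lt_iff₀ hC1]
    nlinarith [hcon, hC0]
  linarith
end OpAux

open OpAux

set_option maxHeartbeats 2000000 in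
/-- operator-norm error bound for weakly low-rank matrices
(Θ* in the ℓ_q-ball of singular values, with the convention 0^0 = 0). -/
theorem opNorm_error_bound_weak_lowrank {N n m : ℕ} (hN : 0 < N)
    (X : Matrix (Fin N) (Fin n) ℝ) (Z : Matrix (Fin N) (Fin (n + m)) ℝ)
    (q Rq : ℝ) (hq0 : 0 ≤ q) (hq1 : q ≤ 1) (hRq : 0 < Rq)
    (Θstar : Matrix (Fin (n + m)) (Fin n) ℝ)
    (hball : ∑ j, (if svals Θstar j = 0 then 0 else (svals Θstar j) ^ q) ≤ Rq)
    (K τ lam : ℝ) (hK : 0 < K) (hτ : 0 ≤ τ) (hlam0 : 0 < lam)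
    (hcurv : ∀ Δ : Matrix (Fin (n + m)) (Fin n) ℝ,
      opNorm (gradFn X Z (Θstar + Δ) - gradFn X Z Θstar) ≥ K * opNorm Δ - τ * nucNorm Δ)
    (hRqK : 128 * τ * Rq ≤ K)
    (hlam : lam ≥ 2 * opNorm (gradFn X Z Θstar))
    (Θhat : Matrix (Fin (n + m)) (Fin n) ℝ)
    (hmin : ∀ Θ : Matrix (Fin (n + m)) (Fin n) ℝ,
      lossFn X Z Θhat + lam * nucNorm Θhat ≤ lossFn X Z Θ + lam * nucNorm Θ) :
    opNorm (Θhat - Θstar) ≤ max (32 * τ * Rq / K) (6 * lam / K) := by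
  classical
  set Δ := Θhat - Θstar with hΔ
  set t := opNorm Δ with ht
  have ht0 : 0 ≤ t := opNorm_nonneg Δ
  have hmax0 : 0 ≤ max (32 * τ * Rq / K) (6 * lam / K) :=
    le_max_of_le_right (div_nonneg (by linarith) (le_of_lt hK))
  rcases eq_or_lt_of_le ht0 with h0 | htpos
  · rw [← h0]; exact hmax0
  have hΘ : Θstar + Δ = Θhat := by rw [hΔ]; abel
  have hcurv' := hcurv Δ
  rw [hΘ] at hcurv'
  have hGhat : opNorm (gradFn X Z Θhat) ≤ lam := grad_opNorm_le hN X Z lam hlam0 Θhat hmin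
  have hGstar : opNorm (gradFn X Z Θstar) ≤ lam / 2 := by linarith
  have hdiff : opNorm (gradFn X Z Θhat - gradFn X Z Θstar) ≤ lam + lam / 2 :=
    (opNorm_sub_le _ _).trans (by linarith)
  have hKt : K * t - τ * nucNorm Δ ≤ (3/2) * lam := by
    have := le_trans hcurv' hdiff
    linarith
  -- threshold set
  set S : Finset (Fin n) := Finset.univ.filter (fun j => t < svals Θstar j) with hSdef
  have hSmem : ∀ j, j ∈ S ↔ t < svals Θstar j := by
    intro j; rw [hSdef]; simp
  have hS : ∀ j ∈ S, svals Θstar j ≠ 0 := by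
    intro j hj
    have := (hSmem j).mp hj
    intro hc; rw [hc] at this; linarith
  obtain ⟨Δ1, Δ2, hsplit, hD1, hD3⟩ := decomp Θstar Δ S hS
  rw [hΘ] at hD3
  set T := ∑ j ∈ Sᶜ, svals Θstar j with hT
  -- basic inequality from minimality at Θstar
  have hminΘs := hmin Θstar
  have hL := loss_expand hN X Z Θstar Δ
  rw [hΘ] at hL
  have hmin' : lam * nucNorm Θhat - lam * nucNorm Θstar ≤ -(fip (gradFn X Z Θstar) Δ) := by
    have hq' := fip_self_nonneg (Z * Δ)
    have hc : (0:ℝ) ≤ 1 / (2 * (N:ℝ)) := by positivity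
    have hcq := mul_nonneg hc hq'
    linarith [hminΘs, hL]
  have hfipG : -(fip (gradFn X Z Θstar) Δ) ≤ (lam / 2) * nucNorm Δ := by
    have h1 := neg_fip_le (gradFn X Z Θstar) Δ
    have hnn := nucNorm_nonneg Δ
    have h2 := mul_le_mul_of_nonneg_right hGstar hnn
    linarith
  have hnucΔ : nucNorm Δ ≤ nucNorm Δ1 + nucNorm Δ2 := by
    rw [hsplit]; exact nucNorm_add_le _ _
  have hAB : nucNorm Θhat - nucNorm Θstar ≤ nucNorm Δ / 2 := by
    have h2 : lam * (nucNorm Θhat - nucNorm Θstar) ≤ lam * (nucNorm Δ / 2) := by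
      have e1 : lam * (nucNorm Θhat - nucNorm Θstar)
          = lam * nucNorm Θhat - lam * nucNorm Θstar := by ring
      have e2 : lam * (nucNorm Δ / 2) = (lam / 2) * nucNorm Δ := by ring
      rw [e1, e2]
      linarith [hmin', hfipG]
    exact le_of_mul_le_mul_left h2 hlam0
  have hcone : nucNorm Δ2 ≤ 3 * nucNorm Δ1 + 4 * T := by
    linarith [hD3, hAB, hnucΔ]
  have hnucΔ4 : nucNorm Δ ≤ 4 * nucNorm Δ1 + 4 * T := by linarith
  -- r and T bounds via the ℓ_q ball
  have hterm_nonneg : ∀ j, (0:ℝ) ≤ (if svals Θstar j = 0 then 0 else (svals Θstar j) ^ q) := by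
    intro j
    split
    · exact le_refl 0
    · exact Real.rpow_nonneg (svals_nonneg Θstar j) q
  have hr : (S.card : ℝ) * t ^ q ≤ Rq := by
    have h1 : ∀ j ∈ S, t ^ q ≤ (if svals Θstar j = 0 then 0 else (svals Θstar j) ^ q) := by
      intro j hj
      rw [if_neg (hS j hj)]
      exact Real.rpow_le_rpow ht0 (le_of_lt ((hSmem j).mp hj)) hq0
    calc (S.card : ℝ) * t ^ q = ∑ _j ∈ S, t ^ q := by rw [Finset.sum_const, nsmul_eq_mul]
      _ ≤ ∑ j ∈ S, (if svals Θstar j = 0 then 0 else (svals Θstar j) ^ q) :=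
          Finset.sum_le_sum h1
      _ ≤ ∑ j, (if svals Θstar j = 0 then 0 else (svals Θstar j) ^ q) :=
          Finset.sum_le_sum_of_subset_of_nonneg (Finset.subset_univ S)
            (fun j _ _ => hterm_nonneg j)
      _ ≤ Rq := hball
  have hTb : T ≤ Rq * t ^ (1 - q) := by
    have h1 : ∀ j ∈ Sᶜ, svals Θstar j
        ≤ (if svals Θstar j = 0 then 0 else (svals Θstar j) ^ q) * t ^ (1 - q) := by
      intro j hj
      have hle : svals Θstar j ≤ t := by
        have : ¬ (t < svals Θstar j) := fun hc => (Finset.mem_compl.mp hj) ((hSmem j).mpr hc)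
        linarith
      by_cases hz : svals Θstar j = 0
      · rw [if_pos hz, hz, zero_mul]
      · rw [if_neg hz]
        have hσpos : 0 < svals Θstar j := lt_of_le_of_ne (svals_nonneg Θstar j) (Ne.symm hz)
        have e1 : svals Θstar j = svals Θstar j ^ q * svals Θstar j ^ (1 - q) := by
          rw [← Real.rpow_add hσpos]
          norm_num
        conv_lhs => rw [e1]
        refine mul_le_mul_of_nonneg_left ?_ (le_of_lt (Real.rpow_pos_of_pos hσpos q))
        exact Real.rpow_le_rpow (le_of_lt hσpos) hle (by linarith)
    calc T ≤ ∑ j ∈ Sᶜ, (if svals Θstar j = 0 then 0 else (svals Θstar j) ^ q) * t ^ (1 - q) :=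
          Finset.sum_le_sum h1
      _ = (∑ j ∈ Sᶜ, (if svals Θstar j = 0 then 0 else (svals Θstar j) ^ q)) * t ^ (1 - q) := by
          rw [Finset.sum_mul]
      _ ≤ Rq * t ^ (1 - q) := by
          have h2 : ∑ j ∈ Sᶜ, (if svals Θstar j = 0 then 0 else (svals Θstar j) ^ q) ≤ Rq := by
            calc ∑ j ∈ Sᶜ, (if svals Θstar j = 0 then 0 else (svals Θstar j) ^ q)
                ≤ ∑ j, (if svals Θstar j = 0 then 0 else (svals Θstar j) ^ q) :=
                  Finset.sum_le_sum_of_subset_of_nonneg (Finset.subset_univ _)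
                    (fun j _ _ => hterm_nonneg j)
              _ ≤ Rq := hball
          have h3 : (0:ℝ) ≤ t ^ (1 - q) := le_of_lt (Real.rpow_pos_of_pos htpos _)
          exact mul_le_mul_of_nonneg_right h2 h3
  -- combine into the master inequality
  have htq_split : t = t ^ q * t ^ (1 - q) := by
    rw [← Real.rpow_add htpos]; norm_num
  have htq_pos : (0:ℝ) < t ^ q := Real.rpow_pos_of_pos htpos q
  have ht1q_pos : (0:ℝ) < t ^ (1 - q) := Real.rpow_pos_of_pos htpos _
  have hrt : (S.card : ℝ) * t ≤ Rq * t ^ (1 - q) := by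
    calc (S.card : ℝ) * t = ((S.card : ℝ) * t ^ q) * t ^ (1 - q) := by
          rw [mul_assoc, ← htq_split]
      _ ≤ Rq * t ^ (1 - q) := mul_le_mul_of_nonneg_right hr (le_of_lt ht1q_pos)
  have hτnuc : τ * nucNorm Δ ≤ 12 * τ * Rq * t ^ (1 - q) := by
    have h1 : nucNorm Δ1 ≤ 2 * (S.card : ℝ) * t := hD1
    have h2 : nucNorm Δ ≤ 8 * ((S.card : ℝ) * t) + 4 * T := by linarith
    have h3 : nucNorm Δ ≤ 8 * (Rq * t ^ (1-q)) + 4 * (Rq * t ^ (1-q)) := by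
      linarith [hrt, hTb]
    calc τ * nucNorm Δ ≤ τ * (8 * (Rq * t ^ (1-q)) + 4 * (Rq * t ^ (1-q))) :=
          mul_le_mul_of_nonneg_left h3 hτ
      _ = 12 * τ * Rq * t ^ (1 - q) := by ring
  have hmaster : K * t ≤ (3/2) * lam + 12 * τ * Rq * t ^ (1 - q) := by linarith
  -- case analysis
  rcases le_or_gt (12 * τ * Rq * t ^ (1 - q)) (K * t / 2) with hcase | hcase
  · -- dominated by lam
    refine le_max_of_le_right ?_
    have h1 : K * t / 2 ≤ (3/2) * lam := by linarith
    rw [le_div_iff₀ hK]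
    linarith
  · -- dominated by the q-ball term
    have hq24 : K * t ^ q < 24 * τ * Rq := by
      have h1 : K * t < 24 * τ * Rq * t ^ (1 - q) := by linarith
      have h2 : K * (t ^ q * t ^ (1 - q)) < (24 * τ * Rq) * t ^ (1 - q) := by
        rw [← htq_split]; linarith
      have h3 := lt_of_mul_lt_mul_right (by linarith [h2] :
        (K * t ^ q) * t ^ (1-q) < (24 * τ * Rq) * t ^ (1-q)) (le_of_lt ht1q_pos)
      exact h3
    by_cases hq0' : q = 0
    · exfalso
      rw [hq0', Real.rpow_zero, mul_one] at hq24
      nlinarith [hτ, hRq, hRqK]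
    · have hqpos : 0 < q := lt_of_le_of_ne hq0 (Ne.symm hq0')
      have hτRq : 0 < τ * Rq := by nlinarith [hq24, htq_pos, hK]
      have h1 : t ^ q < 24 * τ * Rq / K := by
        rw [lt_div_iff₀ hK]; linarith
      have h2 : 24 * τ * Rq / K ≤ (3:ℝ)/16 := by
        rw [div_le_iff₀ hK]; nlinarith
      have ht1 : t < 1 := by
        by_contra hge
        push_neg at hge
        have hh : (1:ℝ) ≤ t ^ q := by
          have := Real.rpow_le_rpow (by norm_num : (0:ℝ) ≤ 1) hge hq0
          rwa [Real.one_rpow] at this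
        linarith [h1.trans_le h2]
      have h3 : t ≤ t ^ q := by
        have := Real.rpow_le_rpow_of_exponent_ge htpos (le_of_lt ht1) hq1
        rwa [Real.rpow_one] at this
      refine le_max_of_le_left ?_
      have h4 : t ≤ 24 * τ * Rq / K := le_of_lt (lt_of_le_of_lt h3 h1)
      have h5 : 24 * τ * Rq / K ≤ 32 * τ * Rq / K := by
        have h6 : 24 * τ * Rq ≤ 32 * τ * Rq := by nlinarith [hτRq]
        exact (div_le_div_iff_of_pos_right hK).mpr h6
      linarith
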